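/- Suppose f is convex (and strictly decreasing, with intercepts L and M) and σ, τ > −1. Then for every c > 1 and every η > 0 there exists r₀ > 0 such that for all r ≥ r₀ and all s with c⁻¹ < s < c, N(r, s) ≤ r² A − r (s⁻¹ τ L + s (σ + 1/2) M) + η r. -/

import Mathlib

open Set Filter Asymptotics MeasureTheory

noncomputable section

/-- The negative part `x⁻ = max(−x, 0)` of a real number. -/
def nneg (x : ℝ) : ℝ := max (-x) 0

/-- The shifted-lattice counting function `N(r,s)`: the number of points of the
shifted lattice `(ℕ+σ) × (ℕ+τ)` lying inside or on the curve `rΓ(s)`. -/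
def countN (f : ℝ → ℝ) (σ τ L r s : ℝ) : ℕ :=
  Set.ncard {p : ℤ × ℤ | 1 ≤ p.1 ∧ 1 ≤ p.2 ∧ ((p.1 : ℝ) + σ) * s / r ≤ L ∧
    (p.2 : ℝ) + τ ≤ r * s * f (((p.1 : ℝ) + σ) * s / r)}

/-- The set `S(r)` of stretch factors `s > 0` maximizing `s ↦ N(r,s)`. -/
def maximizers (f : ℝ → ℝ) (σ τ L r : ℝ) : Set ℝ :=
  {s | 0 < s ∧ ∀ s' > 0, countN f σ τ L r s' ≤ countN f σ τ L r s}

/-- Midpoint rule underestimates the integral of a convex function. -/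
lemma midpoint_le_integral {L : ℝ} {f : ℝ → ℝ} (hfc : ContinuousOn f (Icc 0 L))
    (hconv : ConvexOn ℝ (Icc 0 L) f) {a h : ℝ} (ha : 0 ≤ a) (hh : 0 ≤ h)
    (hab : a + h ≤ L) : h * f (a + h / 2) ≤ ∫ x in a..(a + h), f x := by
  set m := a + h / 2 with hm
  have hmem : ∀ x, a ≤ x → x ≤ a + h → x ∈ Icc 0 L := fun x h1 h2 =>
    ⟨le_trans ha h1, le_trans h2 hab⟩
  have hsub1 : Icc a m ⊆ Icc 0 L := fun x hx => hmem x hx.1 (by simp only [hm] at hx ⊢; linarith [hx.2])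
  have hsub2 : Icc m (a + h) ⊆ Icc 0 L := fun x hx => hmem x (by simp only [hm] at hx ⊢; linarith [hx.1]) hx.2
  have ham : a ≤ m := by simp only [hm]; linarith
  have hmb : m ≤ a + h := by simp only [hm]; linarith
  have i1 : IntervalIntegrable f volume a m :=
    (hfc.mono (by rwa [uIcc_of_le ham])).intervalIntegrable
  have i2 : IntervalIntegrable f volume m (a + h) :=
    (hfc.mono (by rwa [uIcc_of_le hmb])).intervalIntegrable
  have c1 : ContinuousOn (fun t => f (m - t)) (Icc 0 (h / 2)) := by
    apply hfc.comp (by fun_prop)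
    intro t ht
    exact hsub1 ⟨by simp only [hm]; linarith [ht.2], by linarith [ht.1]⟩
  have c2 : ContinuousOn (fun t => f (m + t)) (Icc 0 (h / 2)) := by
    apply hfc.comp (by fun_prop)
    intro t ht
    exact hsub2 ⟨by linarith [ht.1], by simp only [hm]; linarith [ht.2]⟩
  have j1 : IntervalIntegrable (fun t => f (m - t)) volume 0 (h / 2) :=
    (c1.mono (by rw [uIcc_of_le (by linarith)])).intervalIntegrable
  have j2 : IntervalIntegrable (fun t => f (m + t)) volume 0 (h / 2) :=
    (c2.mono (by rw [uIcc_of_le (by linarith)])).intervalIntegrable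
  have key : ∀ t ∈ Icc (0:ℝ) (h / 2), 2 * f m ≤ f (m - t) + f (m + t) := by
    intro t ht
    have h1 : m - t ∈ Icc 0 L := hsub1 ⟨by simp only [hm]; linarith [ht.2], by linarith [ht.1]⟩
    have h2 : m + t ∈ Icc 0 L := hsub2 ⟨by linarith [ht.1], by simp only [hm]; linarith [ht.2]⟩
    have := hconv.2 h1 h2 (by norm_num : (0:ℝ) ≤ 1/2) (by norm_num : (0:ℝ) ≤ 1/2) (by norm_num)
    simp only [smul_eq_mul] at this
    have hmid : (1/2 : ℝ) * (m - t) + (1/2 : ℝ) * (m + t) = m := by ring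
    rw [hmid] at this
    linarith
  have step : ∫ t in (0:ℝ)..(h/2), 2 * f m ≤ ∫ t in (0:ℝ)..(h/2), (f (m - t) + f (m + t)) :=
    intervalIntegral.integral_mono_on (by linarith) (intervalIntegrable_const) (j1.add j2) key
  have e0 : ∫ t in (0:ℝ)..(h/2), (2 : ℝ) * f m = h * f m := by
    rw [intervalIntegral.integral_const]; simp; ring
  have e1 : ∫ t in (0:ℝ)..(h/2), f (m - t) = ∫ x in a..m, f x := by
    rw [intervalIntegral.integral_comp_sub_left f m]
    congr 1 <;> simp only [hm] <;> ring
  have e2 : ∫ t in (0:ℝ)..(h/2), f (m + t) = ∫ x in m..(a+h), f x := by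
    rw [intervalIntegral.integral_comp_add_left f m]
    congr 1 <;> simp only [hm] <;> ring
  have esum : ∫ t in (0:ℝ)..(h/2), (f (m - t) + f (m + t)) = ∫ x in a..(a+h), f x := by
    rw [intervalIntegral.integral_add j1 j2, e1, e2,
      intervalIntegral.integral_add_adjacent_intervals i1 i2]
  calc h * f m = ∫ t in (0:ℝ)..(h/2), (2:ℝ) * f m := e0.symm
    _ ≤ ∫ t in (0:ℝ)..(h/2), (f (m - t) + f (m + t)) := step
    _ = ∫ x in a..(a+h), f x := esum

/-- The counting function is bounded by a sum of column counts. -/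
lemma countN_le_sum (f : ℝ → ℝ) (σ τ L r s : ℝ) (n : ℕ)
    (hn : ∀ j : ℤ, 1 ≤ j → ((j:ℝ) + σ) * s / r ≤ L → j ≤ (n:ℤ)) :
    (countN f σ τ L r s : ℝ) ≤
      ∑ i ∈ Finset.range n, max (r * s * f ((((i:ℝ) + 1) + σ) * s / r) - τ) 0 := by
  classical
  set m : ℕ → ℤ := fun i => ⌊r * s * f ((((i:ℝ) + 1) + σ) * s / r) - τ⌋ with hm
  set T : Finset (ℤ × ℤ) := (Finset.range n).biUnion
    (fun i => (Finset.Icc (1:ℤ) (m i)).image fun k => ((i:ℤ) + 1, k)) with hT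
  have hsub : {p : ℤ × ℤ | 1 ≤ p.1 ∧ 1 ≤ p.2 ∧ ((p.1 : ℝ) + σ) * s / r ≤ L ∧
      (p.2 : ℝ) + τ ≤ r * s * f (((p.1 : ℝ) + σ) * s / r)} ⊆ ↑T := by
    rintro ⟨j, k⟩ ⟨hj1, hk1, hjL, hky⟩
    have hjn : j ≤ (n : ℤ) := hn j hj1 hjL
    set i : ℕ := (j - 1).toNat with hi
    have hij : (i : ℤ) = j - 1 := Int.toNat_of_nonneg (by omega)
    have hin : i < n := by omega
    have harg : (((i:ℝ) + 1) + σ) * s / r = ((j : ℝ) + σ) * s / r := by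
      have : ((i:ℝ) + 1) = (j : ℝ) := by
        have := congrArg (fun z : ℤ => (z : ℝ)) hij
        push_cast at this; linarith
      rw [this]
    rw [Finset.mem_coe, hT, Finset.mem_biUnion]
    refine ⟨i, Finset.mem_range.2 hin, ?_⟩
    rw [Finset.mem_image]
    refine ⟨k, Finset.mem_Icc.2 ⟨hk1, ?_⟩, by rw [Prod.ext_iff]; refine ⟨?_, rfl⟩; simp; omega⟩
    rw [hm]
    apply Int.le_floor.2
    rw [harg]; linarith
  have h1 : countN f σ τ L r s ≤ T.card := by
    rw [countN, ← Set.ncard_coe_finset]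
    exact Set.ncard_le_ncard hsub T.finite_toSet
  have h2 : T.card ≤ ∑ i ∈ Finset.range n, (m i).toNat := by
    refine le_trans (Finset.card_biUnion_le) (Finset.sum_le_sum fun i _ => ?_)
    refine le_trans (Finset.card_image_le) ?_
    rw [Int.card_Icc]
    omega
  calc (countN f σ τ L r s : ℝ) ≤ (∑ i ∈ Finset.range n, (m i).toNat : ℕ) := by
        exact_mod_cast le_trans h1 h2
    _ = ∑ i ∈ Finset.range n, ((m i).toNat : ℝ) := by push_cast; ring
    _ ≤ ∑ i ∈ Finset.range n, max (r * s * f ((((i:ℝ) + 1) + σ) * s / r) - τ) 0 := by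
        refine Finset.sum_le_sum fun i _ => ?_
        rcases le_or_gt (m i) 0 with h | h
        · simp [Int.toNat_of_nonpos h, le_max_right]
        · rw [show ((m i).toNat : ℝ) = (((m i).toNat : ℤ) : ℝ) from by push_cast; ring,
            Int.toNat_of_nonneg h.le]
          exact le_max_of_le_left (Int.floor_le _)

set_option maxHeartbeats 2000000 in
theorem counting_improved_upper_bound_convex (L M σ τ : ℝ) (f : ℝ → ℝ)
    (hL : 0 < L) (hM : 0 < M)
    (hfc : ContinuousOn f (Icc 0 L)) (hfa : StrictAntiOn f (Icc 0 L))
    (hf0 : f 0 = M) (hfL : f L = 0)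
    (hconv : ConvexOn ℝ (Icc 0 L) f)
    (hσ : -1 < σ) (hτ : -1 < τ) :
    ∀ c > (1 : ℝ), ∀ η > (0 : ℝ), ∃ r₀ > (0 : ℝ), ∀ r ≥ r₀, ∀ s : ℝ, c⁻¹ < s → s < c →
      (countN f σ τ L r s : ℝ) ≤
        r ^ 2 * (∫ x in (0 : ℝ)..L, f x)
          - r * (s⁻¹ * τ * L + s * (σ + 1 / 2) * M) + η * r := by
  intro c hc η hη
  have hc0 : (0:ℝ) < c := by linarith
  have hc1 : (0:ℝ) < c⁻¹ := by positivity
  have hσ2 : (0:ℝ) < σ + 2 := by linarith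
  have hσ32 : (0:ℝ) < σ + 3/2 := by linarith
  -- basic facts about f
  have hanti : ∀ a ∈ Icc (0:ℝ) L, ∀ b ∈ Icc (0:ℝ) L, a ≤ b → f b ≤ f a := by
    intro a ha b hb hab
    rcases eq_or_lt_of_le hab with h | h
    · rw [h]
    · exact (hfa ha hb h).le
  have hfM : ∀ x ∈ Icc (0:ℝ) L, f x ≤ M := by
    intro x hx
    have := hanti 0 ⟨le_refl 0, hL.le⟩ x hx hx.1
    rwa [hf0] at this
  have hf_nonneg : ∀ x ∈ Icc (0:ℝ) L, 0 ≤ f x := by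
    intro x hx
    have := hanti x hx L ⟨hL.le, le_refl L⟩ hx.2
    rwa [hfL] at this
  have hInt : ∀ u v : ℝ, 0 ≤ u → u ≤ v → v ≤ L → IntervalIntegrable f volume u v :=
    fun u v h0 huv hvL =>
      (hfc.mono (by rw [uIcc_of_le huv]; exact Icc_subset_Icc h0 hvL)).intervalIntegrable
  -- choose ε
  set ε : ℝ := η / (3 * (c * (σ + 2) + 1)) with hεdef
  have hden : (0:ℝ) < 3 * (c * (σ + 2) + 1) := by nlinarith [mul_pos hc0 hσ2]
  have hε : 0 < ε := div_pos hη hden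
  have hεbound : c * (σ + 2) * ε ≤ η / 3 := by
    rw [hεdef, ← mul_div_assoc, div_le_div_iff₀ hden (by norm_num : (0:ℝ) < 3)]
    nlinarith [mul_pos hc0 hσ2]
  -- choose δt (tail cutoff)
  set τp : ℝ := max τ 0 with hτpdef
  have hτp0 : 0 ≤ τp := le_max_right _ _
  set δt : ℝ := min (L / 2) (η / (3 * c * (τp + 1))) with hδtdef
  have hδt0 : 0 < δt := by
    apply lt_min (by linarith)
    apply div_pos hη
    have : (0:ℝ) < τp + 1 := by linarith
    positivity
  have hδtL2 : δt ≤ L / 2 := min_le_left _ _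
  have hδtb : τp * c * δt ≤ η / 3 := by
    have h1 : δt ≤ η / (3 * c * (τp + 1)) := min_le_right _ _
    have hpos : (0:ℝ) < 3 * c * (τp + 1) := by positivity
    have h2 : τp * c * δt ≤ τp * c * (η / (3 * c * (τp + 1))) :=
      mul_le_mul_of_nonneg_left h1 (by positivity)
    refine le_trans h2 ?_
    rw [← mul_div_assoc, div_le_div_iff₀ hpos (by norm_num : (0:ℝ) < 3)]
    nlinarith [mul_pos hc0 hη, mul_nonneg (mul_nonneg hτp0 hc0.le) hη.le]
  -- continuity moduli at the endpoints
  obtain ⟨δ₀, hδ₀pos, hδ₀⟩ := Metric.continuousWithinAt_iff.1 (hfc 0 ⟨le_refl 0, hL.le⟩) ε hε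
  have hnear0 : ∀ x ∈ Icc (0:ℝ) L, x < δ₀ → M - ε ≤ f x := by
    intro x hx hxd
    have hd : dist x 0 < δ₀ := by
      rw [Real.dist_eq, sub_zero, abs_of_nonneg hx.1]; exact hxd
    have := hδ₀ hx hd
    rw [hf0, Real.dist_eq] at this
    have := abs_lt.1 this
    linarith [this.1]
  obtain ⟨δ₁, hδ₁pos, hδ₁⟩ := Metric.continuousWithinAt_iff.1 (hfc L ⟨hL.le, le_refl L⟩) ε hε
  have hnearL : ∀ x ∈ Icc (0:ℝ) L, L - δ₁ < x → f x ≤ ε := by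
    intro x hx hxd
    have hd : dist x L < δ₁ := by
      rw [Real.dist_eq, abs_of_nonpos (by linarith [hx.2])]; linarith
    have := hδ₁ hx hd
    rw [hfL, Real.dist_eq, sub_zero] at this
    have := abs_lt.1 this
    linarith [this.2, hf_nonneg x hx]
  -- f is positive at L - δt
  have hδtmem : L - δt ∈ Icc (0:ℝ) L := ⟨by linarith, by linarith⟩
  have hfδt : 0 < f (L - δt) := by
    have := hfa hδtmem ⟨hL.le, le_refl L⟩ (by linarith : L - δt < L)
    rwa [hfL] at this
  -- choose r₀ via eventually-at-top conditions
  have hev : ∀ᶠ r : ℝ in atTop, 1 ≤ r ∧ c * (|σ| + 3) / L ≤ r ∧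
      2 * (σ + 3/2) * c / δ₀ ≤ r ∧ 2 * c / δ₁ ≤ r ∧
      (τp + 1) * c / f (L - δt) ≤ r ∧ c * (|σ| + 1) / (L - δt) ≤ r ∧
      3 * (|τ| * (|σ| + 1) + 2 * τp) / η ≤ r :=
    (eventually_ge_atTop _).and ((eventually_ge_atTop _).and ((eventually_ge_atTop _).and
      ((eventually_ge_atTop _).and ((eventually_ge_atTop _).and ((eventually_ge_atTop _).and
      (eventually_ge_atTop _))))))
  obtain ⟨r₀', hr₀'⟩ := eventually_atTop.1 hev
  refine ⟨max r₀' 1, lt_of_lt_of_le one_pos (le_max_right _ _), ?_⟩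
  intro r hr s hs1 hs2
  obtain ⟨hr1, hrK2, hrK3, hrK4, hrK5, hrK6, hrK7⟩ :=
    hr₀' r (le_trans (le_max_left _ _) hr)
  have hr0 : (0:ℝ) < r := lt_of_lt_of_le one_pos hr1
  have hs0 : (0:ℝ) < s := lt_trans hc1 hs1
  have hsinvc : s⁻¹ < c := by
    rw [inv_eq_one_div, div_lt_iff₀ hs0]
    have := mul_lt_mul_of_pos_left hs1 hc0
    rw [mul_inv_cancel₀ hc0.ne'] at this
    linarith
  set h : ℝ := s / r with hhdef
  have hh0 : 0 < h := div_pos hs0 hr0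
  have hrh : r * h = s := by rw [hhdef]; field_simp
  have hhc : h ≤ c / r := by
    rw [hhdef]
    gcongr
  -- the column count n
  have hrLs : σ + 3 ≤ r * L / s := by
    rw [le_div_iff₀ hs0]
    have h1 : c * (|σ| + 3) ≤ r * L := by
      rw [div_le_iff₀ hL] at hrK2; linarith
    have h2 : (σ + 3) * s ≤ (|σ| + 3) * c := by
      apply mul_le_mul (by linarith [le_abs_self σ]) hs2.le hs0.le (by positivity)
    nlinarith
  have hfl0 : (0:ℤ) ≤ ⌊r * L / s - σ⌋ := Int.floor_nonneg.2 (by linarith)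
  set n : ℕ := ⌊r * L / s - σ⌋.toNat with hndef
  have hcastn : ((n:ℕ):ℝ) = ((⌊r * L / s - σ⌋ : ℤ) : ℝ) := by
    rw [hndef]; exact_mod_cast congrArg (fun z : ℤ => (z:ℝ)) (Int.toNat_of_nonneg hfl0)
  have hn_ub : (n:ℝ) ≤ r * L / s - σ := by rw [hcastn]; exact Int.floor_le _
  have hn_lb : r * L / s - σ - 1 < (n:ℝ) := by
    rw [hcastn]; linarith [Int.sub_one_lt_floor (r * L / s - σ)]
  have hn2 : 2 ≤ n := by exact_mod_cast show (2:ℝ) ≤ (n:ℝ) by linarith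
  have hnj : ∀ j : ℤ, 1 ≤ j → ((j:ℝ) + σ) * s / r ≤ L → j ≤ (n:ℤ) := by
    intro j hj hjL
    have hj' : ((j:ℝ) + σ) * (s / r) ≤ L := by rw [← mul_div_assoc]; exact hjL
    have hd : (j:ℝ) + σ ≤ L / (s / r) := (le_div_iff₀ hh0).2 hj'
    have hLd : L / (s / r) = r * L / s := by
      rw [div_div_eq_mul_div]; ring
    have hj2 : (j:ℝ) ≤ r * L / s - σ := by rw [hLd] at hd; linarith
    have h1 : j ≤ ⌊r * L / s - σ⌋ := Int.le_floor.2 hj2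
    omega
  -- column positions
  set X : ℕ → ℝ := fun i => (((i:ℝ) + 1) + σ) * s / r with hXdef
  have hXh : ∀ i : ℕ, X i = ((i:ℝ) + 1 + σ) * h := by
    intro i; rw [hXdef, hhdef]; ring
  have hXL : ((n:ℝ) + σ) * h ≤ L := by
    have h1 : ((n:ℝ) + σ) * h ≤ (r * L / s) * h :=
      mul_le_mul_of_nonneg_right (by linarith) hh0.le
    have h2 : (r * L / s) * h = L := by rw [hhdef]; field_simp
    linarith
  have hXmem : ∀ i, i < n → X i ∈ Icc (0:ℝ) L := by
    intro i hi
    rw [hXh]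
    constructor
    · have : (0:ℝ) < (i:ℝ) + 1 + σ := by
        have : (0:ℝ) ≤ (i:ℝ) := Nat.cast_nonneg i
        linarith
      positivity
    · have hi' : (i:ℝ) + 1 ≤ (n:ℝ) := by exact_mod_cast Nat.succ_le_of_lt hi
      have := mul_le_mul_of_nonneg_right (by linarith : (i:ℝ) + 1 + σ ≤ (n:ℝ) + σ) hh0.le
      linarith
  classical
  -- the column sums
  set g : ℕ → ℝ := fun i => r * s * f (X i) - τ with hgdef
  have hstep1 : (countN f σ τ L r s : ℝ) ≤ ∑ i ∈ Finset.range n, max (g i) 0 := by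
    simpa only [hgdef, hXdef] using countN_le_sum f σ τ L r s n hnj
  -- tail: columns where the count is negative
  have hgpos : ∀ i, i < n → X i ≤ L - δt → 0 ≤ g i := by
    intro i hi hXi
    have hXm := hXmem i hi
    have h1 : f (L - δt) ≤ f (X i) := hanti (X i) hXm (L - δt) hδtmem hXi
    have h2 : (τp + 1) * c ≤ r * f (L - δt) := by
      rw [div_le_iff₀ hfδt] at hrK5; linarith
    have h3 : τp + 1 ≤ r * c⁻¹ * f (L - δt) := by
      rw [show r * c⁻¹ * f (L - δt) = r * f (L - δt) / c by ring, le_div_iff₀ hc0]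
      linarith
    have h5 : r * c⁻¹ ≤ r * s := mul_le_mul_of_nonneg_left hs1.le hr0.le
    have h6 : r * c⁻¹ * f (L - δt) ≤ r * s * f (L - δt) :=
      mul_le_mul_of_nonneg_right h5 hfδt.le
    have h7 : r * s * f (L - δt) ≤ r * s * f (X i) :=
      mul_le_mul_of_nonneg_left h1 (by positivity)
    have hττp : τ ≤ τp := le_max_left _ _
    simp only [hgdef]
    linarith
  have hgub : ∀ i, i < n → max (g i) 0 - g i ≤ τp := by
    intro i hi
    have h0f := hf_nonneg (X i) (hXmem i hi)
    have hrsf : 0 ≤ r * s * f (X i) := by positivity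
    rcases le_total (g i) 0 with hg | hg
    · rw [max_eq_right hg]
      simp only [hgdef] at hg ⊢
      have : τ ≤ τp := le_max_left _ _
      linarith
    · rw [max_eq_left hg]; linarith
  set filt : Finset ℕ := (Finset.range n).filter (fun i => L - δt < X i) with hfilt
  have hsplit : ∑ i ∈ Finset.range n, max (g i) 0 ≤
      ∑ i ∈ Finset.range n, g i + τp * (filt.card : ℝ) := by
    have hkey : ∑ i ∈ Finset.range n, (max (g i) 0 - g i) ≤ τp * (filt.card : ℝ) := by
      rw [← Finset.sum_filter_add_sum_filter_not (Finset.range n) (fun i => L - δt < X i)]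
      have hz : ∑ i ∈ (Finset.range n).filter (fun i => ¬ (L - δt < X i)),
          (max (g i) 0 - g i) = 0 := by
        apply Finset.sum_eq_zero
        intro i hi
        rw [Finset.mem_filter, Finset.mem_range] at hi
        rw [max_eq_left (hgpos i hi.1 (not_lt.1 hi.2))]
        ring
      rw [hz, add_zero, ← hfilt]
      calc ∑ i ∈ filt, (max (g i) 0 - g i) ≤ ∑ _i ∈ filt, τp := by
            apply Finset.sum_le_sum
            intro i hi
            rw [hfilt, Finset.mem_filter, Finset.mem_range] at hi
            exact hgub i hi.1
        _ = τp * (filt.card : ℝ) := by rw [Finset.sum_const, nsmul_eq_mul]; ring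
    have := Finset.sum_sub_distrib (s := Finset.range n) (f := fun i => max (g i) 0) (g := g)
    linarith [hkey, this.symm]
  have hcard : (filt.card : ℝ) ≤ δt * (c * r) + 2 := by
    set β : ℝ := (L - δt) * r / s - σ - 1 with hβdef
    have hLδt : (0:ℝ) < L - δt := by linarith
    have hβ1 : |σ| + 1 ≤ (L - δt) * r / c := by
      rw [le_div_iff₀ hc0]
      rw [div_le_iff₀ hLδt] at hrK6
      nlinarith
    have hβ2 : (L - δt) * r / c ≤ (L - δt) * r / s := by
      rw [div_le_div_iff₀ hc0 hs0]
      exact mul_le_mul_of_nonneg_left hs2.le (by positivity)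
    have hβ0 : 0 ≤ β := by
      rw [hβdef]
      have := le_abs_self σ
      linarith
    set b : ℕ := ⌊β⌋₊ with hbdef
    have hsubset : filt ⊆ Finset.Ico b n := by
      intro i hi
      rw [hfilt, Finset.mem_filter, Finset.mem_range] at hi
      obtain ⟨hin, hXi⟩ := hi
      rw [Finset.mem_Ico]
      refine ⟨?_, hin⟩
      rw [hXh] at hXi
      have h1 : (L - δt) / h < (i:ℝ) + 1 + σ := (div_lt_iff₀ hh0).2 (by linarith)
      have h2 : (L - δt) / h = (L - δt) * r / s := by
        rw [hhdef, div_div_eq_mul_div]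
      have h3 : β ≤ (i:ℝ) := by rw [hβdef]; linarith
      calc b = ⌊β⌋₊ := hbdef
        _ ≤ ⌊((i:ℝ))⌋₊ := Nat.floor_mono h3
        _ = i := Nat.floor_natCast i
    have hcard1 : filt.card ≤ n - b := by
      have := Finset.card_le_card hsubset
      rwa [Nat.card_Ico] at this
    rcases le_or_gt b n with hbn | hbn
    · have hcast : ((n - b : ℕ) : ℝ) = (n:ℝ) - (b:ℝ) := by
        rw [Nat.cast_sub hbn]
      have hblb : β - 1 < (b:ℝ) := by
        have := Nat.lt_floor_add_one β
        rw [← hbdef] at this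
        linarith
      have h4 : (filt.card : ℝ) ≤ (n:ℝ) - (b:ℝ) := by
        rw [← hcast]; exact_mod_cast hcard1
      have h5 : (n:ℝ) - (b:ℝ) ≤ δt * r / s + 2 := by
        rw [hβdef] at hblb
        have heq : r * L / s - σ - ((L - δt) * r / s - σ - 1) + 1 = δt * r / s + 2 := by
          ring
        linarith [hn_ub]
      have h6 : δt * r / s ≤ δt * (c * r) := by
        rw [div_eq_mul_inv]
        calc δt * r * s⁻¹ ≤ δt * r * c :=
              mul_le_mul_of_nonneg_left hsinvc.le (by positivity)
          _ = δt * (c * r) := by ring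
      linarith
    · have : filt.card = 0 := by omega
      rw [this]
      have : (0:ℝ) ≤ δt * (c * r) := by positivity
      simp
      linarith
  have hsumg : ∑ i ∈ Finset.range n, g i =
      r * s * (∑ i ∈ Finset.range n, f (X i)) - (n:ℝ) * τ := by
    simp only [hgdef]
    rw [Finset.sum_sub_distrib, Finset.sum_const, Finset.card_range, ← Finset.mul_sum,
      nsmul_eq_mul]
  -- the midpoint-rule block
  obtain ⟨m', hm'⟩ : ∃ m', n = m' + 2 := ⟨n - 2, by omega⟩
  have hnm : (n:ℝ) = (m':ℝ) + 2 := by rw [hm']; push_cast; ring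
  have hn2' : (2:ℝ) ≤ (n:ℝ) := by exact_mod_cast hn2
  set a : ℕ → ℝ := fun k => (σ + 3/2 + (k:ℝ)) * h with hadef
  have ha_nonneg : ∀ k : ℕ, 0 ≤ a k := by
    intro k
    have hk0 : (0:ℝ) ≤ (k:ℝ) := Nat.cast_nonneg k
    exact mul_nonneg (by linarith) hh0.le
  have ha_succ : ∀ k : ℕ, a (k+1) = a k + h := by
    intro k; simp only [hadef]; push_cast; ring
  have ha_le : ∀ k : ℕ, k ≤ m' → a k ≤ L := by
    intro k hk
    have hk' : (k:ℝ) ≤ (m':ℝ) := by exact_mod_cast hk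
    have h1 : a k ≤ ((n:ℝ) + σ) * h := by
      simp only [hadef]
      apply mul_le_mul_of_nonneg_right _ hh0.le
      rw [hnm]; linarith
    linarith [hXL]
  have hmid : ∀ k, k < m' → h * f (X (k+1)) ≤ ∫ x in (a k)..(a (k+1)), f x := by
    intro k hk
    have h2 : a k + h ≤ L := by rw [← ha_succ]; exact ha_le (k+1) (by omega)
    have hmp := midpoint_le_integral hfc hconv (ha_nonneg k) hh0.le h2
    rw [ha_succ]
    rw [show X (k+1) = a k + h/2 from by rw [hXh]; simp only [hadef]; push_cast; ring]
    exact hmp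
  have hint2 : ∀ k < m', IntervalIntegrable f volume (a k) (a (k+1)) := by
    intro k hk
    exact hInt _ _ (ha_nonneg k) (by rw [ha_succ]; linarith) (ha_le (k+1) (by omega))
  have htel : ∑ k ∈ Finset.range m', ∫ x in (a k)..(a (k+1)), f x
      = ∫ x in (a 0)..(a m'), f x :=
    intervalIntegral.sum_integral_adjacent_intervals hint2
  have ha0 : a 0 = (σ + 3/2) * h := by simp only [hadef]; norm_num
  have ha0L : a 0 ≤ L := ha_le 0 (by omega)
  -- first column
  have hfirst : h * f (X 0) ≤
      (∫ x in (0:ℝ)..(a 0), f x) + (σ + 3/2) * ε * h - (σ + 1/2) * M * h := by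
    have hX0 : f (X 0) ≤ M := hfM _ (hXmem 0 (by omega))
    have h1 : h * f (X 0) ≤ h * M := mul_le_mul_of_nonneg_left hX0 hh0.le
    have hlow : ∀ x ∈ Icc (0:ℝ) (a 0), M - ε ≤ f x := by
      intro x hx
      apply hnear0 x ⟨hx.1, le_trans hx.2 ha0L⟩
      have h2 : (σ+3/2) * h ≤ (σ+3/2) * (c / r) := mul_le_mul_of_nonneg_left hhc hσ32.le
      have h3 : (σ+3/2) * (c / r) ≤ δ₀ / 2 := by
        rw [show (σ+3/2) * (c/r) = (σ+3/2)*c/r from by ring,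
          div_le_div_iff₀ hr0 (by norm_num : (0:ℝ) < 2)]
        rw [div_le_iff₀ hδ₀pos] at hrK3
        linarith
      rw [ha0] at hx
      linarith [hx.2, hδ₀pos]
    have hconstint : ∫ x in (0:ℝ)..(a 0), (M - ε) ≤ ∫ x in (0:ℝ)..(a 0), f x :=
      intervalIntegral.integral_mono_on (ha_nonneg 0) intervalIntegrable_const
        (hInt 0 (a 0) le_rfl (ha_nonneg 0) ha0L) hlow
    rw [intervalIntegral.integral_const] at hconstint
    have heq : (a 0 - 0) • (M - ε) = (σ+3/2) * h * (M - ε) := by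
      rw [ha0]; simp only [smul_eq_mul]; ring
    rw [heq] at hconstint
    have hkey : (σ+3/2)*h*(M-ε) + (σ+3/2)*ε*h - (σ+1/2)*M*h = h * M := by ring
    linarith
  -- last column
  have hXlast : X (m'+1) = ((n:ℝ) + σ) * h := by rw [hXh, hnm]; push_cast; ring
  have hXlastmem : X (m'+1) ∈ Icc (0:ℝ) L := hXmem (m'+1) (by omega)
  have hlastpos : L - δ₁ < X (m'+1) := by
    rw [hXlast]
    have h1 : r*L/s - 1 < (n:ℝ) + σ := by linarith [hn_lb]
    have h2 : (r*L/s - 1) * h < ((n:ℝ)+σ)*h := mul_lt_mul_of_pos_right h1 hh0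
    have h3 : (r*L/s - 1) * h = L - h := by rw [hhdef]; field_simp
    have h4 : h ≤ δ₁/2 := by
      refine le_trans hhc ?_
      rw [div_le_div_iff₀ hr0 (by norm_num : (0:ℝ) < 2)]
      rw [div_le_iff₀ hδ₁pos] at hrK4
      linarith
    linarith [hδ₁pos]
  have hflast : f (X (m'+1)) ≤ ε := hnearL _ hXlastmem hlastpos
  have ham' : a m' = ((n:ℝ) + σ) * h - h/2 := by simp only [hadef]; rw [hnm]; ring
  have hX0nn : 0 ≤ ((n:ℝ) + σ) * h := mul_nonneg (by linarith) hh0.le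
  have hlast : h * f (X (m'+1)) ≤ (∫ x in (a m')..(((n:ℝ)+σ)*h), f x) + ε * (h/2) := by
    have hub : ∀ x ∈ Icc (a m') (((n:ℝ)+σ)*h), f (X (m'+1)) ≤ f x := by
      intro x hx
      apply hanti x ⟨le_trans (ha_nonneg m') hx.1, le_trans hx.2 hXL⟩ (X (m'+1)) hXlastmem
      rw [hXlast]; exact hx.2
    have hconstint : ∫ x in (a m')..(((n:ℝ)+σ)*h), f (X (m'+1))
        ≤ ∫ x in (a m')..(((n:ℝ)+σ)*h), f x :=
      intervalIntegral.integral_mono_on (by rw [ham']; linarith) intervalIntegrable_const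
        (hInt _ _ (ha_nonneg m') (by rw [ham']; linarith) hXL) hub
    rw [intervalIntegral.integral_const] at hconstint
    have heq : (((n:ℝ)+σ)*h - a m') • f (X (m'+1)) = (h/2) * f (X (m'+1)) := by
      rw [ham']; simp only [smul_eq_mul]; ring
    rw [heq] at hconstint
    have h2 : (h/2) * f (X (m'+1)) ≤ (h/2) * ε :=
      mul_le_mul_of_nonneg_left hflast (by positivity)
    have h3 : h * f (X (m'+1)) = (h/2) * f (X (m'+1)) + (h/2) * f (X (m'+1)) := by ring
    linarith
  -- joining the integrals
  have hi12 := hInt 0 (a m') le_rfl (ha_nonneg m') (ha_le m' le_rfl)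
  have hi1 := hInt 0 (a 0) le_rfl (ha_nonneg 0) ha0L
  have ha0m : a 0 ≤ a m' := by
    simp only [hadef]
    apply mul_le_mul_of_nonneg_right _ hh0.le
    simp only [Nat.cast_zero]
    have : (0:ℝ) ≤ (m':ℝ) := Nat.cast_nonneg m'
    linarith
  have hi2 := hInt (a 0) (a m') (ha_nonneg 0) ha0m (ha_le m' le_rfl)
  have hi3 := hInt (a m') (((n:ℝ)+σ)*h) (ha_nonneg m') (by rw [ham']; linarith) hXL
  have hi123 := hInt 0 (((n:ℝ)+σ)*h) le_rfl hX0nn hXL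
  have hi4 := hInt (((n:ℝ)+σ)*h) L hX0nn hXL le_rfl
  have hj1 := intervalIntegral.integral_add_adjacent_intervals hi1 hi2
  have hj2 := intervalIntegral.integral_add_adjacent_intervals hi12 hi3
  have hj3 := intervalIntegral.integral_add_adjacent_intervals hi123 hi4
  have hnonneg4 : 0 ≤ ∫ x in (((n:ℝ)+σ)*h)..L, f x :=
    intervalIntegral.integral_nonneg hXL (fun u hu => hf_nonneg u ⟨le_trans hX0nn hu.1, hu.2⟩)
  have hD : ∑ i ∈ Finset.range n, (h * f (X i)) ≤
      (∫ x in (0:ℝ)..L, f x) - (σ+1/2)*M*h + (σ+2)*ε*h := by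
    rw [hm', Finset.sum_range_succ, Finset.sum_range_succ']
    have hmidsum : ∑ k ∈ Finset.range m', (h * f (X (k+1))) ≤ ∫ x in (a 0)..(a m'), f x := by
      rw [← htel]
      exact Finset.sum_le_sum (fun k hk => hmid k (Finset.mem_range.1 hk))
    have hring : (σ+3/2)*ε*h + ε*(h/2) = (σ+2)*ε*h := by ring
    linarith [hmidsum, hj1, hj2, hj3, hnonneg4, hfirst, hlast, hring]
  -- final assembly
  set Sf : ℝ := ∑ i ∈ Finset.range n, f (X i) with hSfdef
  have hD' : h * Sf ≤ (∫ x in (0:ℝ)..L, f x) - (σ+1/2)*M*h + (σ+2)*ε*h := by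
    rw [hSfdef, Finset.mul_sum]; exact hD
  have hF2 : r * s * Sf ≤ r^2 * (∫ x in (0:ℝ)..L, f x)
      - r*s*((σ+1/2)*M) + r*s*((σ+2)*ε) := by
    have h1 : r * s * Sf = r^2 * (h * Sf) := by rw [← hrh]; ring
    have h2 := mul_le_mul_of_nonneg_left hD' (sq_nonneg r)
    have hexp : r^2 * ((∫ x in (0:ℝ)..L, f x) - (σ+1/2)*M*h + (σ+2)*ε*h)
        = r^2 * (∫ x in (0:ℝ)..L, f x) - r*s*((σ+1/2)*M) + r*s*((σ+2)*ε) := by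
      rw [← hrh]; ring
    rw [h1]
    rw [hexp] at h2
    exact h2
  have hF2' : r*s*((σ+2)*ε) ≤ (η/3) * r := by
    have t1 : r*s*((σ+2)*ε) ≤ r*c*((σ+2)*ε) :=
      mul_le_mul_of_nonneg_right (mul_le_mul_of_nonneg_left hs2.le hr0.le) (by positivity)
    have t2 : r*c*((σ+2)*ε) = (c*(σ+2)*ε) * r := by ring
    have t3 : (c*(σ+2)*ε) * r ≤ (η/3) * r := mul_le_mul_of_nonneg_right hεbound hr0.le
    linarith
  have hF3 : -((n:ℝ)*τ) ≤ -(τ*(r*L/s)) + |τ| *(|σ|+1) := by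
    have habs : |r*L/s - (n:ℝ)| ≤ |σ|+1 := by
      rw [abs_le]
      constructor
      · linarith [neg_abs_le σ, hn_lb]
      · linarith [le_abs_self σ, hn_ub]
    have h1 : τ*(r*L/s - (n:ℝ)) ≤ |τ| *(|σ|+1) :=
      calc τ*(r*L/s - (n:ℝ)) ≤ |τ*(r*L/s - (n:ℝ))| := le_abs_self _
        _ = |τ| *|r*L/s - (n:ℝ)| := abs_mul _ _
        _ ≤ |τ| *(|σ|+1) := mul_le_mul_of_nonneg_left habs (abs_nonneg τ)
    have h2 : τ*(r*L/s - (n:ℝ)) = τ*(r*L/s) - (n:ℝ)*τ := by ring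
    linarith
  have hτcard : τp * (filt.card:ℝ) ≤ (η/3)*r + 2*τp := by
    have h0 := mul_le_mul_of_nonneg_left hcard hτp0
    have h1 : τp*(δt*(c*r)+2) = (τp*c*δt)*r + 2*τp := by ring
    have h2 : (τp*c*δt)*r ≤ (η/3)*r := mul_le_mul_of_nonneg_right hδtb hr0.le
    linarith
  have hF4 : |τ| *(|σ|+1) + 2*τp ≤ (η/3)*r := by
    rw [div_le_iff₀ hη] at hrK7
    linarith
  have hgoal_eq : r^2*(∫ x in (0:ℝ)..L, f x) - r*(s⁻¹*τ*L + s*(σ+1/2)*M) + η*r =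
      r^2*(∫ x in (0:ℝ)..L, f x) - (τ*(r*L/s)) - r*s*((σ+1/2)*M)
        + ((η/3)*r + (η/3)*r + (η/3)*r) := by
    field_simp
    ring
  rw [hgoal_eq]
  have hsumg' : ∑ i ∈ Finset.range n, g i = r * s * Sf - (n:ℝ) * τ := hsumg
  linarith [hstep1, hsplit, hsumg', hF2, hF2', hF3, hτcard, hF4]
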